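/- The linear span of the family of functions {u ↦ e^{s·u} : s ∈ (−∞,0)ⁿ} is dense in the Banach space C₀(ℝ₊ⁿ, ℂ) of continuous complex-valued functions on ℝ₊ⁿ := [0,∞)ⁿ vanishing at infinity, equipped with the supremum norm. -/

import Mathlib

open scoped ZeroAtInfty
open Filter Topology OnePoint

/-- The positive orthant `ℝ₊ⁿ = [0,∞)ⁿ` as a topological space. -/
abbrev PosOrthant (n : ℕ) : Type := {u : Fin n → ℝ // ∀ j, 0 ≤ u j}

instance (n : ℕ) : LocallyCompactSpace (PosOrthant n) := by
  have h : IsClosed {u : Fin n → ℝ | ∀ j, 0 ≤ u j} := by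
    have : {u : Fin n → ℝ | ∀ j, 0 ≤ u j} = ⋂ j, {u | 0 ≤ u j} := by
      ext; simp [Set.mem_iInter]
    rw [this]
    exact isClosed_iInter fun j => isClosed_le continuous_const (continuous_apply j)
  exact h.locallyCompactSpace

noncomputable def sumLin (n : ℕ) (s : Fin n → ℝ) (u : PosOrthant n) : ℝ := ∑ j, s j * u.1 j

lemma sumLin_tendsto_atBot (n : ℕ) (hn : 0 < n) (s : Fin n → ℝ) (hs : ∀ j, s j < 0) :
    Tendsto (sumLin n s) (cocompact (PosOrthant n)) atBot := by
  classical
  have hne : (Finset.univ : Finset (Fin n)).Nonempty := ⟨⟨0, hn⟩, Finset.mem_univ _⟩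
  set σ : ℝ := Finset.univ.sup' hne s with hσdef
  have hσ : σ < 0 := by
    rw [hσdef, Finset.sup'_lt_iff]
    exact fun j _ => hs j
  refine tendsto_atBot.2 fun b => ?_
  set M : ℝ := max 0 (b / σ) with hM
  have hMb : σ * M ≤ b := by
    have : σ * M ≤ σ * (b / σ) :=
      mul_le_mul_of_nonpos_left (le_max_right _ _) hσ.le
    calc σ * M ≤ σ * (b / σ) := this
    _ = b := mul_div_cancel₀ b hσ.ne
  set K : Set (PosOrthant n) :=
    (fun u : PosOrthant n => u.1) ⁻¹' (Set.pi Set.univ fun _ => Set.Icc 0 M) with hK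
  have hKc : IsCompact K := by
    have hcl : IsClosed {u : Fin n → ℝ | ∀ j, 0 ≤ u j} := by
      have : {u : Fin n → ℝ | ∀ j, 0 ≤ u j} = ⋂ j, {u | 0 ≤ u j} := by
        ext; simp [Set.mem_iInter]
      rw [this]
      exact isClosed_iInter fun j => isClosed_le continuous_const (continuous_apply j)
    exact hcl.isClosedEmbedding_subtypeVal.isCompact_preimage
      (isCompact_univ_pi fun _ => isCompact_Icc)
  filter_upwards [Filter.hasBasis_cocompact.eventually_iff.2 ⟨K, hKc, fun u hu => hu⟩] with u hu
  rw [Set.mem_compl_iff, hK, Set.mem_preimage, Set.mem_univ_pi] at hu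
  push_neg at hu
  obtain ⟨j, hj⟩ := hu
  have huj : M < u.1 j := by
    rcases lt_or_ge M (u.1 j) with h | h
    · exact h
    · exact absurd ⟨u.2 j, h⟩ hj
  have h1 : sumLin n s u ≤ s j * u.1 j := by
    rw [sumLin, ← Finset.add_sum_erase _ _ (Finset.mem_univ j)]
    have : ∑ i ∈ Finset.univ.erase j, s i * u.1 i ≤ 0 :=
      Finset.sum_nonpos fun i _ => mul_nonpos_of_nonpos_of_nonneg (hs i).le (u.2 i)
    linarith
  have h2 : s j * u.1 j ≤ σ * u.1 j :=
    mul_le_mul_of_nonneg_right (Finset.le_sup' s (Finset.mem_univ j)) (u.2 j)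
  have h3 : σ * u.1 j ≤ σ * M := mul_le_mul_of_nonpos_left huj.le hσ.le
  linarith


variable (n : ℕ)

lemma expVal (s : Fin n → ℝ) (u : PosOrthant n) :
    Complex.exp (∑ j, (s j : ℂ) * ((u : Fin n → ℝ) j : ℂ))
      = ((Real.exp (∑ j, s j * u.1 j) : ℝ) : ℂ) := by
  rw [Complex.ofReal_exp]
  norm_cast

noncomputable def expC0 (s : Fin n → ℝ) (hs : ∀ j, s j < 0) : C₀(PosOrthant n, ℂ) where
  toFun u := Complex.exp (∑ j, (s j : ℂ) * ((u : Fin n → ℝ) j : ℂ))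
  continuous_toFun := Complex.continuous_exp.comp <| continuous_finset_sum _ fun j _ =>
    continuous_const.mul <| Complex.continuous_ofReal.comp <|
      (continuous_apply j).comp continuous_subtype_val
  zero_at_infty' := by
    suffices h : Tendsto (fun u : PosOrthant n => ((Real.exp (∑ j, s j * u.1 j) : ℝ) : ℂ))
        (cocompact (PosOrthant n)) (𝓝 0) by
      exact h.congr fun u => (expVal n s u).symm
    rcases Nat.eq_zero_or_pos n with hn | hn
    · subst hn
      have hsub : Subsingleton (PosOrthant 0) :=
        ⟨fun a b => Subtype.ext (Subsingleton.elim _ _)⟩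
      have : Finite (PosOrthant 0) := Finite.of_subsingleton
      have : CompactSpace (PosOrthant 0) := Finite.compactSpace
      rw [Filter.cocompact_eq_bot]
      exact tendsto_bot
    · have h1 := sumLin_tendsto_atBot n hn s hs
      have h2 : Tendsto (fun u : PosOrthant n => Real.exp (∑ j, s j * u.1 j))
          (cocompact (PosOrthant n)) (𝓝 0) := Real.tendsto_exp_atBot.comp h1
      have h3 := (Complex.continuous_ofReal.tendsto 0).comp h2
      simpa [Function.comp_def] using h3

lemma expC0_apply (s : Fin n → ℝ) (hs : ∀ j, s j < 0) (u : PosOrthant n) :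
    expC0 n s hs u = Complex.exp (∑ j, (s j : ℂ) * ((u : Fin n → ℝ) j : ℂ)) := rfl

noncomputable def extMap : C₀(PosOrthant n, ℂ) →ₗ[ℂ] C(OnePoint (PosOrthant n), ℂ) where
  toFun f := OnePoint.continuousMapMk f.toContinuousMap 0 (by
    rw [Filter.coclosedCompact_eq_cocompact]
    exact f.zero_at_infty')
  map_add' f g := by
    ext x
    cases x <;> simp [OnePoint.continuousMapMk]
  map_smul' c f := by
    ext x
    cases x <;> simp [OnePoint.continuousMapMk]

@[simp] lemma extMap_apply_coe (f : C₀(PosOrthant n, ℂ)) (u : PosOrthant n) :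
    extMap n f (u : OnePoint (PosOrthant n)) = f u := rfl
@[simp] lemma extMap_apply_infty (f : C₀(PosOrthant n, ℂ)) : extMap n f ∞ = 0 := rfl


/-- The linear span of the exponentials `u ↦ e^{s·u}`, `s ∈ (−∞,0)ⁿ`,
is dense in the Banach space `C₀(ℝ₊ⁿ, ℂ)` of continuous complex functions on
`ℝ₊ⁿ = [0,∞)ⁿ` vanishing at infinity, with the supremum norm. -/
theorem span_exponentials_dense_in_C0 (n : ℕ) :
    Dense ((Submodule.span ℂ
        {g : C₀(PosOrthant n, ℂ) | ∃ s : Fin n → ℝ, (∀ j, s j < 0) ∧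
          ∀ u : PosOrthant n, g u = Complex.exp (∑ j, (s j : ℂ) * ((u : Fin n → ℝ) j : ℂ))}
        : Submodule ℂ C₀(PosOrthant n, ℂ)) : Set C₀(PosOrthant n, ℂ)) := by
  classical
  set E : Set C₀(PosOrthant n, ℂ) :=
    {g : C₀(PosOrthant n, ℂ) | ∃ s : Fin n → ℝ, (∀ j, s j < 0) ∧
      ∀ u : PosOrthant n, g u = Complex.exp (∑ j, (s j : ℂ) * ((u : Fin n → ℝ) j : ℂ))}
    with hEdef
  set E' : Set C(OnePoint (PosOrthant n), ℂ) := ⇑(extMap n) '' E with hE'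
  have hexpE : ∀ (s : Fin n → ℝ) (hs : ∀ j, s j < 0), expC0 n s hs ∈ E :=
    fun s hs => ⟨s, hs, fun u => expC0_apply n s hs u⟩
  have hEexp : ∀ g ∈ E, ∃ s, ∃ hs : ∀ j, s j < 0, g = expC0 n s hs := by
    rintro g ⟨s, hs, hg⟩
    exact ⟨s, hs, DFunLike.ext _ _ fun u => by rw [hg u, expC0_apply]⟩
  -- E' is closed under multiplication
  have hmul : ∀ g₁ ∈ E', ∀ g₂ ∈ E', g₁ * g₂ ∈ E' := by
    rintro _ ⟨g₁, hg₁, rfl⟩ _ ⟨g₂, hg₂, rfl⟩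
    obtain ⟨s, hs, rfl⟩ := hEexp _ hg₁
    obtain ⟨t, ht, rfl⟩ := hEexp _ hg₂
    refine ⟨expC0 n (fun j => s j + t j) (fun j => add_neg (hs j) (ht j)), hexpE _ _, ?_⟩
    ext x
    cases x with
    | infty =>
      show _ = (_ * _ : C(_, ℂ)) (∞ : OnePoint (PosOrthant n))
      rw [ContinuousMap.mul_apply]
      simp
    | coe u =>
      show (extMap n) _ (u : OnePoint (PosOrthant n)) = (_ * _ : C(_, ℂ)) (u : OnePoint (PosOrthant n))
      rw [ContinuousMap.mul_apply]
      simp only [extMap_apply_coe, expC0_apply]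
      rw [← Complex.exp_add, ← Finset.sum_add_distrib]
      push_cast
      ring_nf
      exact congrArg Complex.exp (Finset.sum_congr rfl fun x _ => by ring)
  -- elements of E' are self-adjoint
  have hstar : ∀ g ∈ E', star g = g := by
    rintro _ ⟨g, hg, rfl⟩
    obtain ⟨s, hs, rfl⟩ := hEexp _ hg
    ext x
    rw [ContinuousMap.star_apply]
    cases x with
    | infty =>
      show star ((extMap n) _ (∞ : OnePoint (PosOrthant n))) = _
      simp
    | coe u =>
      show star ((extMap n) _ (u : OnePoint (PosOrthant n))) = _
      simp only [extMap_apply_coe, expC0_apply, expVal]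
      rw [Complex.star_def, Complex.conj_ofReal]
  have hEstar : E' ∪ star E' = E' := by
    apply Set.union_eq_self_of_subset_right
    intro x hx
    rw [Set.mem_star] at hx
    have h := hstar _ hx
    rw [star_star] at h
    exact h ▸ hx
  -- the star subalgebra generated by E'
  set A : StarSubalgebra ℂ C(OnePoint (PosOrthant n), ℂ) := StarAlgebra.adjoin ℂ E' with hA
  have hAsub : A.toSubalgebra = Algebra.adjoin ℂ E' := by
    rw [hA, StarAlgebra.adjoin_toSubalgebra, hEstar]
  have hmemA : ∀ g ∈ E', g ∈ A := fun g hg => StarAlgebra.subset_adjoin ℂ E' hg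
  -- A separates points
  have hsep : A.SeparatesPoints := by
    intro x y hxy
    have key : ∀ (s : Fin n → ℝ) (hs : ∀ j, s j < 0),
        ∃ f ∈ (fun f : C(OnePoint (PosOrthant n), ℂ) => (f : OnePoint (PosOrthant n) → ℂ)) ''
          (A : Set C(OnePoint (PosOrthant n), ℂ)), f = ⇑((extMap n) (expC0 n s hs)) :=
      fun s hs => ⟨⇑((extMap n) (expC0 n s hs)), ⟨(extMap n) (expC0 n s hs),
        hmemA _ ⟨expC0 n s hs, hexpE s hs, rfl⟩, rfl⟩, rfl⟩
    have hval : ∀ (s : Fin n → ℝ) (hs : ∀ j, s j < 0) (u : PosOrthant n),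
        (extMap n) (expC0 n s hs) (u : OnePoint (PosOrthant n))
          = ((Real.exp (∑ j, s j * u.1 j) : ℝ) : ℂ) := by
      intro s hs u
      rw [extMap_apply_coe, expC0_apply, expVal]
    cases x with
    | infty =>
      cases y with
      | infty => exact absurd rfl hxy
      | coe v =>
        obtain ⟨f, hf, hfeq⟩ := key (fun _ => -1) (fun _ => by norm_num)
        refine ⟨f, hf, ?_⟩
        rw [hfeq]
        show (extMap n) _ (∞ : OnePoint (PosOrthant n)) ≠ (extMap n) _ (v : OnePoint (PosOrthant n))
        rw [extMap_apply_infty, hval]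
        exact fun h => by
          have := Complex.ofReal_eq_zero.mp h.symm
          exact (Real.exp_pos _).ne' this
    | coe u =>
      cases y with
      | infty =>
        obtain ⟨f, hf, hfeq⟩ := key (fun _ => -1) (fun _ => by norm_num)
        refine ⟨f, hf, ?_⟩
        rw [hfeq]
        show (extMap n) _ (u : OnePoint (PosOrthant n)) ≠ (extMap n) _ (∞ : OnePoint (PosOrthant n))
        rw [extMap_apply_infty, hval]
        exact fun h => (Real.exp_pos _).ne' (Complex.ofReal_eq_zero.mp h)
      | coe v =>
        have huv : u ≠ v := fun h => hxy (by rw [h])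
        obtain ⟨i, hi⟩ : ∃ i, u.1 i ≠ v.1 i := by
          by_contra h
          push_neg at h
          exact huv (Subtype.ext (funext h))
        by_cases hab : ∑ j, u.1 j = ∑ j, v.1 j
        · -- use s with an extra -1 at coordinate i
          set s : Fin n → ℝ := fun j => if j = i then -2 else -1 with hsdef
          have hs : ∀ j, s j < 0 := fun j => by
            rw [hsdef]; dsimp only; split <;> norm_num
          obtain ⟨f, hf, hfeq⟩ := key s hs
          refine ⟨f, hf, ?_⟩
          rw [hfeq]
          show (extMap n) _ (u : OnePoint (PosOrthant n)) ≠ (extMap n) _ (v : OnePoint (PosOrthant n))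
          rw [hval, hval]
          have hsum : ∀ w : PosOrthant n,
              ∑ j, s j * w.1 j = (∑ j, -(w.1 j)) + -(w.1 i) := by
            intro w
            have : ∀ j, s j * w.1 j = -(w.1 j) + (if j = i then -(w.1 j) else 0) := by
              intro j
              rw [hsdef]; dsimp only
              split <;> ring
            rw [Finset.sum_congr rfl fun j _ => this j, Finset.sum_add_distrib,
              Finset.sum_ite_eq' Finset.univ i (fun j => -(w.1 j))]
            simp
          rw [hsum, hsum]
          intro h
          have h2 := Complex.ofReal_inj.mp h
          have h3 := Real.exp_injective h2
          have h4 : ∑ j, -(u.1 j) = ∑ j, -(v.1 j) := by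
            rw [Finset.sum_neg_distrib, Finset.sum_neg_distrib, hab]
          rw [h4] at h3
          exact hi (by linarith [add_left_cancel h3])
        · obtain ⟨f, hf, hfeq⟩ := key (fun _ => -1) (fun _ => by norm_num)
          refine ⟨f, hf, ?_⟩
          rw [hfeq]
          show (extMap n) _ (u : OnePoint (PosOrthant n)) ≠ (extMap n) _ (v : OnePoint (PosOrthant n))
          rw [hval, hval]
          intro h
          have h2 := Real.exp_injective (Complex.ofReal_inj.mp h)
          apply hab
          have : ∑ j, (-1 : ℝ) * u.1 j = ∑ j, (-1 : ℝ) * v.1 j := h2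
          simpa [neg_eq_iff_eq_neg, Finset.sum_neg_distrib] using this
  -- Stone-Weierstrass
  have htop := ContinuousMap.starSubalgebra_topologicalClosure_eq_top_of_separatesPoints A hsep
  -- density argument
  intro f
  rw [Metric.mem_closure_iff]
  intro ε hε
  have hfc : (extMap n) f ∈ closure (A : Set C(OnePoint (PosOrthant n), ℂ)) := by
    rw [← StarSubalgebra.topologicalClosure_coe, htop]
    exact StarSubalgebra.mem_top
  rw [Metric.mem_closure_iff] at hfc
  obtain ⟨g, hgA, hgd⟩ := hfc (ε/3) (by linarith)
  -- decompose g
  have hgspan : g ∈ Submodule.span ℂ ((Submonoid.closure E' : Submonoid _) :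
      Set C(OnePoint (PosOrthant n), ℂ)) := by
    have : g ∈ Algebra.adjoin ℂ E' := by
      rw [← hAsub]
      exact hgA
    rwa [← Subalgebra.mem_toSubmodule, Algebra.adjoin_eq_span] at this
  have hcl : ((Submonoid.closure E' : Submonoid _) : Set C(OnePoint (PosOrthant n), ℂ))
      ⊆ insert 1 E' := by
    let S : Submonoid C(OnePoint (PosOrthant n), ℂ) :=
      { carrier := insert 1 E'
        one_mem' := Set.mem_insert _ _
        mul_mem' := by
          intro a b ha hb
          rcases Set.mem_insert_iff.mp ha with rfl | ha
          · rwa [one_mul]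
          rcases Set.mem_insert_iff.mp hb with rfl | hb
          · rwa [mul_one]
          exact Set.mem_insert_iff.mpr (Or.inr (hmul a ha b hb)) }
    have hle : Submonoid.closure E' ≤ S :=
      Submonoid.closure_le.2 (fun x hx => Set.mem_insert_iff.mpr (Or.inr hx))
    exact fun x hx => hle hx
  have hgspan2 : g ∈ Submodule.span ℂ (insert (1 : C(OnePoint (PosOrthant n), ℂ)) E') :=
    Submodule.span_mono hcl hgspan
  rw [Submodule.span_insert] at hgspan2
  obtain ⟨a, ha, b, hb, rfl⟩ := Submodule.mem_sup.mp hgspan2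
  obtain ⟨c, rfl⟩ := Submodule.mem_span_singleton.mp ha
  rw [hE', Submodule.span_image] at hb
  obtain ⟨h₀, hh₀, rfl⟩ := hb
  -- estimate the constant
  have hcnorm : ‖c‖ < ε/3 := by
    have h1 := ContinuousMap.dist_apply_le_dist (f := (extMap n) f)
      (g := c • (1 : C(OnePoint (PosOrthant n), ℂ)) + (extMap n) h₀) (∞ : OnePoint (PosOrthant n))
    have h2 : (c • (1 : C(OnePoint (PosOrthant n), ℂ)) + (extMap n) h₀) (∞ : OnePoint (PosOrthant n))
        = c := by simp
    rw [extMap_apply_infty, h2, dist_zero_left] at h1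
    exact lt_of_le_of_lt h1 hgd
  -- final estimate
  refine ⟨h₀, hh₀, ?_⟩
  rw [← ZeroAtInftyContinuousMap.dist_toBCF_eq_dist]
  have key : dist f.toBCF h₀.toBCF ≤ ε/3 + ε/3 := by
    rw [BoundedContinuousFunction.dist_le (by linarith)]
    intro u
    calc dist (f.toBCF u) (h₀.toBCF u)
        = dist ((extMap n) f (u : OnePoint (PosOrthant n)))
            ((extMap n) h₀ (u : OnePoint (PosOrthant n))) := by
          rw [extMap_apply_coe, extMap_apply_coe]; rfl
    _ ≤ dist ((extMap n) f (u : OnePoint (PosOrthant n)))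
          ((c • (1 : C(OnePoint (PosOrthant n), ℂ)) + (extMap n) h₀) (u : OnePoint (PosOrthant n)))
        + dist ((c • (1 : C(OnePoint (PosOrthant n), ℂ)) + (extMap n) h₀) (u : OnePoint (PosOrthant n)))
            ((extMap n) h₀ (u : OnePoint (PosOrthant n))) := dist_triangle _ _ _
    _ ≤ dist ((extMap n) f) (c • (1 : C(OnePoint (PosOrthant n), ℂ)) + (extMap n) h₀) + ‖c‖ := by
          refine add_le_add (ContinuousMap.dist_apply_le_dist _) (le_of_eq ?_)
          simp [dist_eq_norm]
    _ ≤ ε/3 + ε/3 := add_le_add hgd.le hcnorm.le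
  linarith [key]
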